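/- arXiv:2211.09236 — 5 statements merged into one kernel-verified Lean document; each statement's English description precedes it below -/
import Mathlib

section
/- Let t > 0 and suppose c: ℝ → H is a continuous map into a complex Hilbert space and π: ℝ → U(H) is a unitary representation with c(b+d) = c(b) + π(b)c(d) for all b, d, and ‖c(λ²b)‖ = λᵗ‖c(b)‖ for all λ > 0. If c is not identically zero, then t ≤ 2. -/
theorem stmt7 {H : Type*} [NormedAddCommGroup H] [InnerProductSpace ℂ H] [CompleteSpace H]
    (t : ℝ) (ht : 0 < t) (c : ℝ → H) (hc : Continuous c)
    (π : ℝ → (H ≃ₗᵢ[ℂ] H)) (hπ : ∀ a b : ℝ, π (a + b) = (π a).trans (π b))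
    (hcoc : ∀ b d : ℝ, c (b + d) = c b + π b (c d))
    (hhom : ∀ l : ℝ, 0 < l → ∀ b : ℝ, ‖c (l ^ 2 * b)‖ = l ^ t * ‖c b‖)
    (hne : ∃ b : ℝ, c b ≠ 0) :
    t ≤ 2 := by
  obtain ⟨b, hb⟩ := hne
  have hbpos : 0 < ‖c b‖ := norm_pos_iff.mpr hb
  have h1 : ‖c (2 * b)‖ = Real.sqrt 2 ^ t * ‖c b‖ := by
    have := hhom (Real.sqrt 2) (Real.sqrt_pos.mpr (by norm_num)) b
    rwa [Real.sq_sqrt (by norm_num : (0:ℝ) ≤ 2)] at this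
  have h2 : ‖c (2 * b)‖ ≤ 2 * ‖c b‖ := by
    have : (2 : ℝ) * b = b + b := by ring
    rw [this, hcoc b b]
    calc ‖c b + π b (c b)‖ ≤ ‖c b‖ + ‖π b (c b)‖ := norm_add_le _ _
      _ = 2 * ‖c b‖ := by rw [(π b).norm_map]; ring
  have h3 : Real.sqrt 2 ^ t ≤ Real.sqrt 2 ^ (2 : ℝ) := by
    have := h1 ▸ h2
    have h4 : Real.sqrt 2 ^ t ≤ 2 := le_of_mul_le_mul_right this hbpos
    rwa [Real.rpow_two, Real.sq_sqrt (by norm_num : (0:ℝ) ≤ 2)]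
  exact (Real.rpow_le_rpow_left_iff (by
    rw [show (1:ℝ) = Real.sqrt 1 from (Real.sqrt_one).symm]
    exact Real.sqrt_lt_sqrt (by norm_num) (by norm_num))).mp h3
end

section
/- Suppose c: ℝ → H satisfies the cocycle identity c(b+d) = c(b) + π(b)c(d) for a unitary representation π of (ℝ,+), and suppose ‖c(2b)‖ = 2‖c(b)‖ for all b. Then π(d)c(b) = c(b) for all b, d ∈ ℝ; in particular b ↦ c(b) is additive (linear over ℚ). -/
theorem stmt8 {H : Type*} [NormedAddCommGroup H] [InnerProductSpace ℂ H] [CompleteSpace H]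
    (c : ℝ → H) (π : ℝ → (H ≃ₗᵢ[ℂ] H))
    (hπ : ∀ a b : ℝ, π (a + b) = (π a).trans (π b))
    (hcoc : ∀ b d : ℝ, c (b + d) = c b + π b (c d))
    (hnorm : ∀ b : ℝ, ‖c (2 * b)‖ = 2 * ‖c b‖) :
    (∀ b d : ℝ, π d (c b) = c b) ∧ (∀ b d : ℝ, c (b + d) = c b + c d) := by
  -- Step 1: π b fixes c b, by equality in the triangle inequality (parallelogram law).
  have hfix : ∀ b : ℝ, π b (c b) = c b := by
    intro b
    have h2 : c (2 * b) = c b + π b (c b) := by rw [two_mul]; exact hcoc b b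
    have hn : ‖π b (c b)‖ = ‖c b‖ := (π b).norm_map _
    have hp := parallelogram_law_with_norm ℂ (c b) (π b (c b))
    have hsum : ‖c b + π b (c b)‖ = 2 * ‖c b‖ := by rw [← h2]; exact hnorm b
    rw [hsum, hn] at hp
    have hz : ‖c b - π b (c b)‖ = 0 := by
      nlinarith [norm_nonneg (c b - π b (c b))]
    have := norm_eq_zero.mp hz
    have := sub_eq_zero.mp this
    exact this.symm
  -- Step 2: key identity π d (π b (π b (c d))) = c d for all b d.
  have hkey : ∀ b d : ℝ, π d (π b (π b (c d))) = c d := by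
    intro b d
    have hA : c b + π b (c d) = c d + π d (c b) := by
      rw [← hcoc b d, ← hcoc d b, add_comm b d]
    have h := hfix (b + d)
    rw [hcoc b d, hπ b d] at h
    simp only [LinearIsometryEquiv.trans_apply, map_add, hfix b] at h
    -- h : π d (c b) + π d (π b (π b (c d))) = c b + π b (c d)
    have h' : π d (c b) + π d (π b (π b (c d))) = π d (c b) + c d := by
      rw [h, hA]; abel
    exact add_left_cancel h'
  have hmain : ∀ b d : ℝ, π d (c b) = c b := by
    intro b d
    have ht : d = (d - b) / 2 + ((d - b) / 2 + b) := by ring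
    rw [ht, hπ, hπ]
    simp only [LinearIsometryEquiv.trans_apply]
    exact hkey ((d - b) / 2) b
  exact ⟨hmain, fun b d => by rw [hcoc b d, hmain d b]⟩
end

section
/- Let 0 < t < 2 with t ≠ 1, let K(1) ∈ ℂ be nonzero, and define for b,d ∈ ℝ the kernel ⟨c(b), c(d)⟩ := (−|b−d|ᵗ + |b|ᵗ + |d|ᵗ)·Re(−K(1)) + i·(sgn(b−d)|b−d|ᵗ − sgn(b)|b|ᵗ + sgn(d)|d|ᵗ)·Im(K(1)) (with sgn(0)·0 := 0), arising from vectors c(b) in a Hilbert space. Then the family {c(b)}_{b ∈ ℝ∖{0}} is ℂ-linearly independent. -/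
open Complex

/-- The kernel of Lemma 1.24: `⟨c(b), c(d)⟩` expressed in terms of `t` and `K(1)`. -/
noncomputable def kerK (t : ℝ) (K1 : ℂ) (b d : ℝ) : ℂ :=
  (((-(|b - d| ^ t) + |b| ^ t + |d| ^ t) * (-K1).re : ℝ) : ℂ) +
    Complex.I * ((Real.sign (b - d) * |b - d| ^ t - Real.sign b * |b| ^ t +
      Real.sign d * |d| ^ t) * K1.im : ℝ)


section Stmt9Aux
open Filter Set

lemma stmt9aux_deriv_bound_aux (φ ψ : ℝ → ℝ) {ε M : ℝ} (hε : 0 ≤ ε) (hφ0 : φ 0 = 0)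
    (hder : ∀ x ∈ Set.Icc (0:ℝ) ε, HasDerivAt φ (ψ x) x)
    (hbd : ∀ x ∈ Set.Icc (0:ℝ) ε, |ψ x| ≤ M) : |φ ε| ≤ M * ε := by
  have h := (convex_Icc (0:ℝ) ε).norm_image_sub_le_of_norm_hasDerivWithin_le
      (f' := ψ) (fun x hx => (hder x hx).hasDerivWithinAt)
      (fun x hx => by simpa [Real.norm_eq_abs] using hbd x hx)
      (Set.left_mem_Icc.2 hε) (Set.right_mem_Icc.2 hε)
  simpa [hφ0, Real.norm_eq_abs, _root_.abs_of_nonneg hε] using h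

lemma stmt9aux_factor_tendsto {t : ℝ} (ht0 : 0 < t) (ht2 : t < 2) (C : ℝ) :
    Tendsto (fun ε : ℝ => C * ε ^ (2 - t)) (nhdsWithin 0 (Set.Ioi 0)) (nhds 0) := by
  have h : Tendsto (fun ε : ℝ => ε ^ (2 - t)) (nhds 0) (nhds ((0:ℝ) ^ (2 - t))) :=
    (Real.continuousAt_rpow_const 0 (2 - t) (Or.inr (by linarith))).tendsto
  rw [Real.zero_rpow (by linarith)] at h
  simpa using (h.mono_left nhdsWithin_le_nhds).const_mul C

lemma stmt9aux_quot_tendsto {t : ℝ} (ht0 : 0 < t) (ht2 : t < 2) {Φ : ℝ → ℝ} {C δ : ℝ} (hδ : 0 < δ)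
    (hb : ∀ ε ∈ Set.Ioo (0:ℝ) δ, |Φ ε| ≤ C * ε ^ 2) :
    Tendsto (fun ε : ℝ => Φ ε / ε ^ t) (nhdsWithin 0 (Set.Ioi 0)) (nhds 0) := by
  refine squeeze_zero_norm' (a := fun ε => C * ε ^ (2 - t)) ?_ (stmt9aux_factor_tendsto ht0 ht2 C)
  filter_upwards [Ioo_mem_nhdsGT_of_mem (by constructor <;> [exact le_refl (0:ℝ); exact hδ])]
    with ε hε
  have hε0 : (0:ℝ) < ε := hε.1
  have hεt : (0:ℝ) < ε ^ t := Real.rpow_pos_of_pos hε0 t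
  rw [Real.norm_eq_abs, abs_div, _root_.abs_of_pos hεt, div_le_iff₀ hεt]
  calc |Φ ε| ≤ C * ε ^ 2 := hb ε hε
    _ = C * ε ^ (2 - t) * ε ^ t := by
        rw [mul_assoc, ← Real.rpow_natCast ε 2, ← Real.rpow_add hε0]
        norm_num

lemma stmt9aux_goodball {G : ℝ → ℝ} {c : ℝ} (hG : ContDiffAt ℝ 2 G c) :
    ∃ δ : ℝ, 0 < δ ∧ ∃ K : NNReal,
      (∀ x ∈ Metric.ball c (5*δ), HasDerivAt G (deriv G x) x) ∧
      LipschitzOnWith K (deriv G) (Metric.ball c (5*δ)) := by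
  obtain ⟨u, hu, hCD⟩ := hG.contDiffOn le_rfl (by simp)
  obtain ⟨r, hr, hball⟩ := Metric.mem_nhds_iff.1 hu
  have hCDb : ContDiffOn ℝ 2 G (Metric.ball c r) := hCD.mono hball
  rw [show (2 : WithTop ℕ∞) = 1 + 1 by norm_num,
    contDiffOn_succ_iff_deriv_of_isOpen Metric.isOpen_ball] at hCDb
  obtain ⟨hdiff, -, hd1⟩ := hCDb
  have hd1at : ContDiffAt ℝ 1 (deriv G) c :=
    hd1.contDiffAt (Metric.isOpen_ball.mem_nhds (Metric.mem_ball_self hr))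
  obtain ⟨K, s, hs, hlip⟩ := hd1at.exists_lipschitzOnWith
  obtain ⟨r', hr', hball'⟩ := Metric.mem_nhds_iff.1 hs
  refine ⟨min r r' / 5, by positivity, K, ?_, ?_⟩
  · intro x hx
    have hx' : x ∈ Metric.ball c r := by
      refine Metric.ball_subset_ball ?_ hx
      have := min_le_left r r'; linarith
    exact (hdiff.differentiableAt (Metric.isOpen_ball.mem_nhds hx')).hasDerivAt
  · refine hlip.mono (subset_trans (Metric.ball_subset_ball ?_) hball')
    have := min_le_right r r'; linarith

lemma stmt9aux_mem_ball_of_abs {c x δ : ℝ} (h : |x| < 5 * δ) : c + x ∈ Metric.ball c (5*δ) := by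
  simp [Metric.mem_ball, Real.dist_eq, abs_sub_comm]
  simpa [add_sub_cancel_left] using h

lemma stmt9aux_sym_smooth {t : ℝ} (ht0 : 0 < t) (ht2 : t < 2) {G : ℝ → ℝ} {c : ℝ}
    (hG : ContDiffAt ℝ 2 G c) :
    Filter.Tendsto (fun ε : ℝ => (G (c+ε) + G (c-ε) - 2*G c)/ε^t)
      (nhdsWithin 0 (Set.Ioi 0)) (nhds 0) := by
  obtain ⟨δ, hδ, K, hder, hlip⟩ := stmt9aux_goodball hG
  refine stmt9aux_quot_tendsto ht0 ht2 hδ (C := 2*K) ?_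
  intro ε hε
  have hε0 : 0 < ε := hε.1
  have hεδ : ε < δ := hε.2
  have hmem : ∀ x ∈ Set.Icc (0:ℝ) ε, ∀ s : ℝ, |s| ≤ 2 → c + s*x ∈ Metric.ball c (5*δ) := by
    intro x hx s hs
    apply stmt9aux_mem_ball_of_abs
    have hxa : |x| ≤ ε := by rw [_root_.abs_of_nonneg hx.1]; exact hx.2
    have h1 : |s*x| ≤ 2 * ε := by
      rw [abs_mul]
      exact mul_le_mul hs hxa (abs_nonneg x) (by norm_num)
    linarith
  have key : |G (c+ε) + G (c-ε) - 2*G c| ≤ (2*K*ε) * ε := by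
    apply stmt9aux_deriv_bound_aux _ (fun x => deriv G (c+x) - deriv G (c-x)) (le_of_lt hε0) (by ring)
    · intro x hx
      have h1 : HasDerivAt (fun y : ℝ => G (c + y)) (deriv G (c+x)) x :=
        (hder _ (by simpa using hmem x hx 1 (by norm_num))).comp_const_add c x
      have h2 : HasDerivAt (fun y : ℝ => G (c - y)) (-deriv G (c-x)) x :=
        (hder _ (by simpa [sub_eq_add_neg] using hmem x hx (-1) (by norm_num))).comp_const_sub c x
      simpa [sub_eq_add_neg] using (h1.add h2).sub_const (2*G c)
    · intro x hx
      have h := hlip.dist_le_mul (c+x) (by simpa using hmem x hx 1 (by norm_num))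
        (c-x) (by simpa [sub_eq_add_neg] using hmem x hx (-1) (by norm_num))
      rw [Real.dist_eq, Real.dist_eq] at h
      have hxx : |c + x - (c - x)| = 2*x := by
        rw [show c + x - (c - x) = 2*x by ring, _root_.abs_of_nonneg (by nlinarith [hx.1])]
      rw [hxx] at h
      calc |deriv G (c+x) - deriv G (c-x)| ≤ K * (2*x) := by exact_mod_cast h
        _ ≤ 2*K*ε := by have := hx.2; nlinarith [K.coe_nonneg, hx.1]
  calc |G (c+ε) + G (c-ε) - 2*G c| ≤ (2*K*ε)*ε := key
    _ = 2*K*ε^2 := by ring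


lemma astmt9aux_sym_smooth {t : ℝ} (ht0 : 0 < t) (ht2 : t < 2) {G : ℝ → ℝ} {c : ℝ}
    (hG : ContDiffAt ℝ 2 G c) :
    Filter.Tendsto (fun ε : ℝ => (G (c+ε) - G (c-ε) - (G (c+2*ε) - G (c-2*ε))/2)/ε^t)
      (nhdsWithin 0 (Set.Ioi 0)) (nhds 0) := by
  obtain ⟨δ, hδ, K, hder, hlip⟩ := stmt9aux_goodball hG
  refine stmt9aux_quot_tendsto ht0 ht2 hδ (C := 2*K) ?_
  intro ε hε
  have hε0 : 0 < ε := hε.1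
  have hεδ : ε < δ := hε.2
  have hmem : ∀ x ∈ Set.Icc (0:ℝ) ε, ∀ s : ℝ, |s| ≤ 2 → c + s*x ∈ Metric.ball c (5*δ) := by
    intro x hx s hs
    apply stmt9aux_mem_ball_of_abs
    have hxa : |x| ≤ ε := by rw [_root_.abs_of_nonneg hx.1]; exact hx.2
    have h1 : |s*x| ≤ 2 * ε := by
      rw [abs_mul]
      exact mul_le_mul hs hxa (abs_nonneg x) (by norm_num)
    linarith
  have key : |G (c+ε) - G (c-ε) - (G (c+2*ε) - G (c-2*ε))/2| ≤ (2*K*ε) * ε := by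
    apply stmt9aux_deriv_bound_aux _
      (fun x => (deriv G (c+x) - deriv G (c+2*x)) + (deriv G (c-x) - deriv G (c-2*x)))
      (le_of_lt hε0) (by ring)
    · intro x hx
      have m1 := hmem x hx 1 (by norm_num)
      have m2 := hmem x hx (-1) (by norm_num)
      have m3 := hmem x hx 2 (by norm_num)
      have m4 := hmem x hx (-2) (by norm_num)
      have h1 : HasDerivAt (fun y : ℝ => G (c + y)) (deriv G (c+x)) x :=
        (hder _ (by simpa using m1)).comp_const_add c x
      have h2 : HasDerivAt (fun y : ℝ => G (c - y)) (-deriv G (c-x)) x :=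
        (hder _ (by simpa [sub_eq_add_neg] using m2)).comp_const_sub c x
      have hin3 : HasDerivAt (fun y : ℝ => c + 2*y) 2 x := by
        simpa using ((hasDerivAt_id x).const_mul (2:ℝ)).const_add c
      have hin4 : HasDerivAt (fun y : ℝ => c - 2*y) (-2) x := by
        have : HasDerivAt (fun y : ℝ => c + (-2)*y) (-2) x := by
          simpa using ((hasDerivAt_id x).const_mul (-2:ℝ)).const_add c
        refine this.congr_deriv rfl |>.congr_of_eventuallyEq ?_
        filter_upwards with y; ring
      have h3 : HasDerivAt (fun y : ℝ => G (c + 2*y)) (deriv G (c+2*x) * 2) x := by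
        have := (hder _ (by simpa using m3)).comp x hin3
        exact this
      have h4 : HasDerivAt (fun y : ℝ => G (c - 2*y)) (deriv G (c-2*x) * (-2)) x := by
        have := (hder _ (by simpa [sub_eq_add_neg] using m4)).comp x hin4
        exact this
      have := (h1.sub h2).sub ((h3.sub h4).div_const 2)
      exact (this.congr_of_eventuallyEq (Filter.Eventually.of_forall fun y => rfl)).congr_deriv (by ring)
    · intro x hx
      have m1 := hmem x hx 1 (by norm_num)
      have m2 := hmem x hx (-1) (by norm_num)
      have m3 := hmem x hx 2 (by norm_num)
      have m4 := hmem x hx (-2) (by norm_num)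
      have e1 : c + 1*x = c + x := by ring
      have e2 : c + (-1)*x = c - x := by ring
      have e3 : c + 2*x = c + 2*x := rfl
      have e4 : c + (-2)*x = c - 2*x := by ring
      rw [e1] at m1; rw [e2] at m2; rw [e4] at m4
      have ha := hlip.dist_le_mul (c+x) m1 (c+2*x) m3
      have hb := hlip.dist_le_mul (c-x) m2 (c-2*x) m4
      have hxa : |c + x - (c + 2*x)| = x := by
        rw [show c + x - (c+2*x) = -x by ring, abs_neg, _root_.abs_of_nonneg hx.1]
      have hxb : |c - x - (c - 2*x)| = x := by
        rw [show c - x - (c-2*x) = x by ring, _root_.abs_of_nonneg hx.1]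
      simp only [Real.dist_eq] at ha hb
      rw [hxa] at ha
      rw [hxb] at hb
      have hx2 := hx.2
      calc |(deriv G (c+x) - deriv G (c+2*x)) + (deriv G (c-x) - deriv G (c-2*x))|
          ≤ |deriv G (c+x) - deriv G (c+2*x)| + |deriv G (c-x) - deriv G (c-2*x)| := abs_add_le _ _
        _ ≤ ↑K*x + ↑K*x := add_le_add ha hb
        _ ≤ 2*K*ε := by nlinarith [K.coe_nonneg, hx.1]
  calc |G (c+ε) - G (c-ε) - (G (c+2*ε) - G (c-2*ε))/2| ≤ (2*K*ε)*ε := key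
    _ = 2*K*ε^2 := by ring

lemma stmt9aux_abs_rpow_eq (t : ℝ) (x : ℝ) : |x| ^ t = (x^2) ^ (t/2) := by
  rw [← Real.sqrt_sq_eq_abs, Real.sqrt_eq_rpow, ← Real.rpow_mul (sq_nonneg x)]
  ring_nf

lemma stmt9aux_cd_abs {t b p : ℝ} (hb : b ≠ p) : ContDiffAt ℝ 2 (fun d => |b - d| ^ t) p := by
  have h : (fun d : ℝ => |b - d| ^ t) = (fun y : ℝ => y ^ (t/2)) ∘ (fun d : ℝ => (b - d)^2) := by
    funext d; exact stmt9aux_abs_rpow_eq t (b - d)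
  rw [h]
  exact (Real.contDiffAt_rpow_const_of_ne (p := t/2) (by
      simpa [sub_eq_zero] using (pow_ne_zero 2 (sub_ne_zero.2 hb)))).comp p
    (((contDiff_const.sub contDiff_id).pow 2).contDiffAt)

lemma stmt9aux_cd_sgn {t b p : ℝ} (hb : b ≠ p) :
    ContDiffAt ℝ 2 (fun d => Real.sign (b - d) * |b - d| ^ t) p := by
  have hcd : ContDiffAt ℝ 2 (fun d : ℝ => Real.sign (b - p) * |b - d| ^ t) p :=
    (stmt9aux_cd_abs hb).const_smul (Real.sign (b - p))
  apply hcd.congr_of_eventuallyEq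
  rcases lt_or_gt_of_ne (sub_ne_zero.2 hb) with hneg | hpos
  · have : ∀ᶠ d in nhds p, d ∈ Set.Ioi b := (isOpen_Ioi.eventually_mem (by simpa using hneg))
    filter_upwards [this] with d hd
    have hd' : b < d := by simpa using hd
    rw [Real.sign_of_neg (show b - d < 0 by linarith), Real.sign_of_neg hneg]
  · have : ∀ᶠ d in nhds p, d ∈ Set.Iio b := (isOpen_Iio.eventually_mem (by simpa using hpos))
    filter_upwards [this] with d hd
    have hd' : d < b := by simpa using hd
    rw [Real.sign_of_pos (show 0 < b - d by linarith), Real.sign_of_pos hpos]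

lemma stmt9aux_stmt9aux_cd_abs0 {t p : ℝ} (hp : p ≠ 0) : ContDiffAt ℝ 2 (fun d : ℝ => |d| ^ t) p := by
  simpa only [zero_sub, abs_neg] using stmt9aux_cd_abs (t := t) (Ne.symm hp)

lemma stmt9aux_stmt9aux_cd_sgn0 {t p : ℝ} (hp : p ≠ 0) :
    ContDiffAt ℝ 2 (fun d : ℝ => Real.sign d * |d| ^ t) p := by
  simpa only [zero_sub, Real.sign_neg, abs_neg, neg_mul, neg_neg]
    using (stmt9aux_cd_sgn (t := t) (Ne.symm hp)).neg

lemma stmt9aux_sym_abs_self {t : ℝ} (ht0 : 0 < t) (p : ℝ) :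
    Filter.Tendsto (fun ε : ℝ => (|p - (p+ε)|^t + |p - (p-ε)|^t - 2*|p - p|^t)/ε^t)
      (nhdsWithin 0 (Set.Ioi 0)) (nhds 2) := by
  have h : (fun _ : ℝ => (2:ℝ)) =ᶠ[nhdsWithin 0 (Set.Ioi 0)]
      (fun ε : ℝ => (|p - (p+ε)|^t + |p - (p-ε)|^t - 2*|p - p|^t)/ε^t) := by
    filter_upwards [self_mem_nhdsWithin] with ε hε
    have hε0 : (0:ℝ) < ε := hε
    rw [show p - (p+ε) = -ε by ring, show p - (p-ε) = ε by ring, abs_neg,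
      _root_.abs_of_pos hε0, sub_self, abs_zero, Real.zero_rpow (ne_of_gt ht0)]
    have hne : ε^t ≠ 0 := ne_of_gt (Real.rpow_pos_of_pos hε0 t)
    field_simp
    ring
  exact Filter.Tendsto.congr' h tendsto_const_nhds

lemma astmt9aux_sym_abs_self {t : ℝ} (p : ℝ) :
    Filter.Tendsto (fun ε : ℝ =>
        (|p - (p+ε)|^t - |p - (p-ε)|^t - (|p - (p+2*ε)|^t - |p - (p-2*ε)|^t)/2)/ε^t)
      (nhdsWithin 0 (Set.Ioi 0)) (nhds 0) := by
  have h : (fun _ : ℝ => (0:ℝ)) =ᶠ[nhdsWithin 0 (Set.Ioi 0)]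
      (fun ε : ℝ =>
        (|p - (p+ε)|^t - |p - (p-ε)|^t - (|p - (p+2*ε)|^t - |p - (p-2*ε)|^t)/2)/ε^t) := by
    filter_upwards [self_mem_nhdsWithin] with ε hε
    rw [show p - (p+ε) = -ε by ring, show p - (p-ε) = ε by ring,
      show p - (p+2*ε) = -(2*ε) by ring, show p - (p-2*ε) = 2*ε by ring, abs_neg, abs_neg]
    ring
  exact Filter.Tendsto.congr' h tendsto_const_nhds

lemma stmt9aux_sym_sgn_self {t : ℝ} (ht0 : 0 < t) (p : ℝ) :
    Filter.Tendsto (fun ε : ℝ =>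
        (Real.sign (p - (p+ε)) * |p - (p+ε)|^t + Real.sign (p - (p-ε)) * |p - (p-ε)|^t
          - 2*(Real.sign (p - p) * |p - p|^t))/ε^t)
      (nhdsWithin 0 (Set.Ioi 0)) (nhds 0) := by
  have h : (fun _ : ℝ => (0:ℝ)) =ᶠ[nhdsWithin 0 (Set.Ioi 0)]
      (fun ε : ℝ =>
        (Real.sign (p - (p+ε)) * |p - (p+ε)|^t + Real.sign (p - (p-ε)) * |p - (p-ε)|^t
          - 2*(Real.sign (p - p) * |p - p|^t))/ε^t) := by
    filter_upwards [self_mem_nhdsWithin] with ε hε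
    have hε0 : (0:ℝ) < ε := hε
    rw [show p - (p+ε) = -ε by ring, show p - (p-ε) = ε by ring, sub_self,
      Real.sign_zero, Real.sign_of_neg (by linarith : -ε < 0), Real.sign_of_pos hε0,
      abs_neg]
    ring
  exact Filter.Tendsto.congr' h tendsto_const_nhds

lemma astmt9aux_sym_sgn_self {t : ℝ} (ht0 : 0 < t) (p : ℝ) :
    Filter.Tendsto (fun ε : ℝ =>
        (Real.sign (p - (p+ε)) * |p - (p+ε)|^t - Real.sign (p - (p-ε)) * |p - (p-ε)|^t
          - (Real.sign (p - (p+2*ε)) * |p - (p+2*ε)|^t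
             - Real.sign (p - (p-2*ε)) * |p - (p-2*ε)|^t)/2)/ε^t)
      (nhdsWithin 0 (Set.Ioi 0)) (nhds ((2:ℝ)^t - 2)) := by
  have h : (fun _ : ℝ => ((2:ℝ)^t - 2)) =ᶠ[nhdsWithin 0 (Set.Ioi 0)]
      (fun ε : ℝ =>
        (Real.sign (p - (p+ε)) * |p - (p+ε)|^t - Real.sign (p - (p-ε)) * |p - (p-ε)|^t
          - (Real.sign (p - (p+2*ε)) * |p - (p+2*ε)|^t
             - Real.sign (p - (p-2*ε)) * |p - (p-2*ε)|^t)/2)/ε^t) := by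
    filter_upwards [self_mem_nhdsWithin] with ε hε
    have hε0 : (0:ℝ) < ε := hε
    have h2ε : (0:ℝ) < 2*ε := by linarith
    rw [show p - (p+ε) = -ε by ring, show p - (p-ε) = ε by ring,
      show p - (p+2*ε) = -(2*ε) by ring, show p - (p-2*ε) = 2*ε by ring,
      Real.sign_of_neg (by linarith : -ε < 0), Real.sign_of_pos hε0,
      Real.sign_of_neg (by linarith : -(2*ε) < 0), Real.sign_of_pos h2ε,
      abs_neg, abs_neg, _root_.abs_of_pos hε0, _root_.abs_of_pos h2ε,
      Real.mul_rpow (by norm_num) (le_of_lt hε0)]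
    have hne : ε^t ≠ 0 := ne_of_gt (Real.rpow_pos_of_pos hε0 t)
    field_simp
    ring
  exact Filter.Tendsto.congr' h tendsto_const_nhds

lemma stmt9aux_toC {f g : ℝ → ℝ} {l : Filter ℝ} {Lf Lg : ℝ}
    (hf : Filter.Tendsto f l (nhds Lf)) (hg : Filter.Tendsto g l (nhds Lg)) :
    Filter.Tendsto (fun ε => ((f ε : ℂ) + Complex.I * (g ε : ℂ))) l
      (nhds ((Lf:ℂ) + Complex.I * Lg)) :=
  ((Complex.continuous_ofReal.tendsto _).comp hf).add
    (((Complex.continuous_ofReal.tendsto _).comp hg).const_mul Complex.I)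

lemma stmt9aux_ker_sym_self {t : ℝ} (ht0 : 0 < t) (ht2 : t < 2) (K1 : ℂ) {p : ℝ} (hp : p ≠ 0) :
    Filter.Tendsto (fun ε : ℝ =>
        (kerK t K1 p (p+ε) + kerK t K1 p (p-ε) - 2 * kerK t K1 p p) / ((ε^t : ℝ) : ℂ))
      (nhdsWithin 0 (Set.Ioi 0)) (nhds ((-2 * (-K1).re : ℝ) : ℂ)) := by
  have h1 := stmt9aux_sym_abs_self ht0 p
  have h3 := stmt9aux_sym_smooth ht0 ht2 (stmt9aux_stmt9aux_cd_abs0 (t := t) hp)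
  have h2 := stmt9aux_sym_sgn_self ht0 p
  have h4 := stmt9aux_sym_smooth ht0 ht2 (stmt9aux_stmt9aux_cd_sgn0 (t := t) hp)
  have hP := (h1.neg.add h3).mul_const ((-K1).re)
  have hQ := (h2.add h4).mul_const (K1.im)
  have hC := stmt9aux_toC hP hQ
  have hC' := hC.congr (f₂ := fun ε : ℝ =>
      (kerK t K1 p (p+ε) + kerK t K1 p (p-ε) - 2 * kerK t K1 p p) / ((ε^t : ℝ) : ℂ))
    (fun ε => by simp only [kerK]; push_cast; ring)
  have heq : ((((-2 : ℝ) + 0) * (-K1).re : ℝ) : ℂ) + Complex.I * (((0 + 0 : ℝ) * K1.im : ℝ) : ℂ)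
      = ((-2 * (-K1).re : ℝ) : ℂ) := by push_cast; ring
  rwa [heq] at hC'

lemma stmt9aux_ker_asym_self {t : ℝ} (ht0 : 0 < t) (ht2 : t < 2) (K1 : ℂ) {p : ℝ} (hp : p ≠ 0) :
    Filter.Tendsto (fun ε : ℝ =>
        (kerK t K1 p (p+ε) - kerK t K1 p (p-ε)
          - (kerK t K1 p (p+2*ε) - kerK t K1 p (p-2*ε))/2) / ((ε^t : ℝ) : ℂ))
      (nhdsWithin 0 (Set.Ioi 0)) (nhds (Complex.I * ((((2:ℝ)^t - 2) * K1.im : ℝ) : ℂ))) := by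
  have h1 := astmt9aux_sym_abs_self (t := t) p
  have h3 := astmt9aux_sym_smooth ht0 ht2 (stmt9aux_stmt9aux_cd_abs0 (t := t) hp)
  have h2 := astmt9aux_sym_sgn_self ht0 p
  have h4 := astmt9aux_sym_smooth ht0 ht2 (stmt9aux_stmt9aux_cd_sgn0 (t := t) hp)
  have hP := (h1.neg.add h3).mul_const ((-K1).re)
  have hQ := (h2.add h4).mul_const (K1.im)
  have hC := stmt9aux_toC hP hQ
  have hC' := hC.congr (f₂ := fun ε : ℝ =>
      (kerK t K1 p (p+ε) - kerK t K1 p (p-ε)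
        - (kerK t K1 p (p+2*ε) - kerK t K1 p (p-2*ε))/2) / ((ε^t : ℝ) : ℂ))
    (fun ε => by simp only [kerK]; push_cast; ring)
  have heq : ((((-0 : ℝ) + 0) * (-K1).re : ℝ) : ℂ)
        + Complex.I * (((((2:ℝ)^t - 2) + 0 : ℝ) * K1.im : ℝ) : ℂ)
      = Complex.I * ((((2:ℝ)^t - 2) * K1.im : ℝ) : ℂ) := by push_cast; ring
  rwa [heq] at hC'

lemma stmt9aux_ker_sym_other {t : ℝ} (ht0 : 0 < t) (ht2 : t < 2) (K1 : ℂ) {b p : ℝ} (hb : b ≠ p)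
    (hp : p ≠ 0) :
    Filter.Tendsto (fun ε : ℝ =>
        (kerK t K1 b (p+ε) + kerK t K1 b (p-ε) - 2 * kerK t K1 b p) / ((ε^t : ℝ) : ℂ))
      (nhdsWithin 0 (Set.Ioi 0)) (nhds 0) := by
  have h1 := stmt9aux_sym_smooth ht0 ht2 (stmt9aux_cd_abs (t := t) hb)
  have h3 := stmt9aux_sym_smooth ht0 ht2 (stmt9aux_stmt9aux_cd_abs0 (t := t) hp)
  have h2 := stmt9aux_sym_smooth ht0 ht2 (stmt9aux_cd_sgn (t := t) hb)
  have h4 := stmt9aux_sym_smooth ht0 ht2 (stmt9aux_stmt9aux_cd_sgn0 (t := t) hp)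
  have hP := (h1.neg.add h3).mul_const ((-K1).re)
  have hQ := (h2.add h4).mul_const (K1.im)
  have hC := stmt9aux_toC hP hQ
  have hC' := hC.congr (f₂ := fun ε : ℝ =>
      (kerK t K1 b (p+ε) + kerK t K1 b (p-ε) - 2 * kerK t K1 b p) / ((ε^t : ℝ) : ℂ))
    (fun ε => by simp only [kerK]; push_cast; ring)
  have heq : ((((-0 : ℝ) + 0) * (-K1).re : ℝ) : ℂ) + Complex.I * (((0 + 0 : ℝ) * K1.im : ℝ) : ℂ)
      = (0 : ℂ) := by push_cast; ring
  rwa [heq] at hC'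

lemma stmt9aux_ker_asym_other {t : ℝ} (ht0 : 0 < t) (ht2 : t < 2) (K1 : ℂ) {b p : ℝ} (hb : b ≠ p)
    (hp : p ≠ 0) :
    Filter.Tendsto (fun ε : ℝ =>
        (kerK t K1 b (p+ε) - kerK t K1 b (p-ε)
          - (kerK t K1 b (p+2*ε) - kerK t K1 b (p-2*ε))/2) / ((ε^t : ℝ) : ℂ))
      (nhdsWithin 0 (Set.Ioi 0)) (nhds 0) := by
  have h1 := astmt9aux_sym_smooth ht0 ht2 (stmt9aux_cd_abs (t := t) hb)
  have h3 := astmt9aux_sym_smooth ht0 ht2 (stmt9aux_stmt9aux_cd_abs0 (t := t) hp)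
  have h2 := astmt9aux_sym_smooth ht0 ht2 (stmt9aux_cd_sgn (t := t) hb)
  have h4 := astmt9aux_sym_smooth ht0 ht2 (stmt9aux_stmt9aux_cd_sgn0 (t := t) hp)
  have hP := (h1.neg.add h3).mul_const ((-K1).re)
  have hQ := (h2.add h4).mul_const (K1.im)
  have hC := stmt9aux_toC hP hQ
  have hC' := hC.congr (f₂ := fun ε : ℝ =>
      (kerK t K1 b (p+ε) - kerK t K1 b (p-ε)
        - (kerK t K1 b (p+2*ε) - kerK t K1 b (p-2*ε))/2) / ((ε^t : ℝ) : ℂ))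
    (fun ε => by simp only [kerK]; push_cast; ring)
  have heq : ((((-0 : ℝ) + 0) * (-K1).re : ℝ) : ℂ) + Complex.I * (((0 + 0 : ℝ) * K1.im : ℝ) : ℂ)
      = (0 : ℂ) := by push_cast; ring
  rwa [heq] at hC'


end Stmt9Aux

theorem stmt9 {H : Type*} [NormedAddCommGroup H] [InnerProductSpace ℂ H] [CompleteSpace H]
    (t : ℝ) (ht0 : 0 < t) (ht2 : t < 2) (ht1 : t ≠ 1)
    (K1 : ℂ) (hK1 : K1 ≠ 0) (c : ℝ → H)
    (hker : ∀ b d : ℝ, (inner ℂ (c b) (c d) : ℂ) = kerK t K1 b d) :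
    LinearIndependent ℂ (fun b : {x : ℝ // x ≠ 0} => c b.val) := by
  rw [linearIndependent_iff']
  intro s g hsum j hj
  set p : ℝ := j.1 with hpdef
  have hp : p ≠ 0 := j.2
  have hF : ∀ d : ℝ, (∑ i ∈ s, (starRingEnd ℂ) (g i) * kerK t K1 i.1 d) = 0 := by
    intro d
    have h0 : (inner ℂ (∑ i ∈ s, g i • c i.1) (c d) : ℂ) = 0 := by
      have : (∑ i ∈ s, g i • c i.1) = 0 := by simpa using hsum
      rw [this, inner_zero_left]
    rw [sum_inner] at h0
    simpa only [inner_smul_left, hker] using h0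
  have h2t : (2:ℝ)^t ≠ 2 := by
    rcases lt_or_gt_of_ne ht1 with h | h
    · have := (Real.rpow_lt_rpow_left_iff (x := 2) one_lt_two).2 h
      rw [Real.rpow_one] at this; exact ne_of_lt this
    · have := (Real.rpow_lt_rpow_left_iff (x := 2) one_lt_two).2 h
      rw [Real.rpow_one] at this; exact ne_of_gt this
  -- symmetric limit
  have hSymTerms : ∀ i ∈ s, Filter.Tendsto (fun ε : ℝ => (starRingEnd ℂ) (g i) *
        ((kerK t K1 i.1 (p+ε) + kerK t K1 i.1 (p-ε) - 2 * kerK t K1 i.1 p) / ((ε^t : ℝ) : ℂ)))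
      (nhdsWithin 0 (Set.Ioi 0))
      (nhds (if i = j then (starRingEnd ℂ) (g i) * ((-2 * (-K1).re : ℝ) : ℂ) else 0)) := by
    intro i _
    by_cases h : i = j
    · subst h
      simp only [if_pos rfl]
      exact (stmt9aux_ker_sym_self ht0 ht2 K1 hp).const_mul _
    · simp only [if_neg h]
      have hbp : (i : ℝ) ≠ p := fun hh => h (Subtype.ext hh)
      simpa using (stmt9aux_ker_sym_other ht0 ht2 K1 hbp hp).const_mul ((starRingEnd ℂ) (g i))
  have hSym := tendsto_finset_sum s hSymTerms
  rw [Finset.sum_ite_eq' s j, if_pos hj] at hSym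
  have hzero1 : ∀ ε : ℝ, (∑ i ∈ s, (starRingEnd ℂ) (g i) *
      ((kerK t K1 i.1 (p+ε) + kerK t K1 i.1 (p-ε) - 2 * kerK t K1 i.1 p) / ((ε^t : ℝ) : ℂ)))
      = 0 := by
    intro ε
    have step : ∀ i : {x : ℝ // x ≠ 0}, (starRingEnd ℂ) (g i) *
        ((kerK t K1 i.1 (p+ε) + kerK t K1 i.1 (p-ε) - 2 * kerK t K1 i.1 p) / ((ε^t : ℝ) : ℂ))
        = ((starRingEnd ℂ) (g i) * kerK t K1 i.1 (p+ε))/((ε^t : ℝ) : ℂ)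
          + ((starRingEnd ℂ) (g i) * kerK t K1 i.1 (p-ε))/((ε^t : ℝ) : ℂ)
          - (2*((starRingEnd ℂ) (g i) * kerK t K1 i.1 p))/((ε^t : ℝ) : ℂ) := fun i => by ring
    rw [Finset.sum_congr rfl (fun i _ => step i), Finset.sum_sub_distrib, Finset.sum_add_distrib,
      ← Finset.sum_div, ← Finset.sum_div, ← Finset.sum_div, ← Finset.mul_sum,
      hF, hF, hF]
    simp
  have h1 : (starRingEnd ℂ) (g j) * ((-2 * (-K1).re : ℝ) : ℂ) = 0 :=
    tendsto_nhds_unique hSym ((Filter.tendsto_congr hzero1).mpr tendsto_const_nhds)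
  -- antisymmetric limit
  have hAsymTerms : ∀ i ∈ s, Filter.Tendsto (fun ε : ℝ => (starRingEnd ℂ) (g i) *
        ((kerK t K1 i.1 (p+ε) - kerK t K1 i.1 (p-ε)
          - (kerK t K1 i.1 (p+2*ε) - kerK t K1 i.1 (p-2*ε))/2) / ((ε^t : ℝ) : ℂ)))
      (nhdsWithin 0 (Set.Ioi 0))
      (nhds (if i = j then (starRingEnd ℂ) (g i) *
        (Complex.I * ((((2:ℝ)^t - 2) * K1.im : ℝ) : ℂ)) else 0)) := by
    intro i _
    by_cases h : i = j
    · subst h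
      simp only [if_pos rfl]
      exact (stmt9aux_ker_asym_self ht0 ht2 K1 hp).const_mul _
    · simp only [if_neg h]
      have hbp : (i : ℝ) ≠ p := fun hh => h (Subtype.ext hh)
      simpa using (stmt9aux_ker_asym_other ht0 ht2 K1 hbp hp).const_mul ((starRingEnd ℂ) (g i))
  have hAsym := tendsto_finset_sum s hAsymTerms
  rw [Finset.sum_ite_eq' s j, if_pos hj] at hAsym
  have hzero2 : ∀ ε : ℝ, (∑ i ∈ s, (starRingEnd ℂ) (g i) *
      ((kerK t K1 i.1 (p+ε) - kerK t K1 i.1 (p-ε)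
        - (kerK t K1 i.1 (p+2*ε) - kerK t K1 i.1 (p-2*ε))/2) / ((ε^t : ℝ) : ℂ))) = 0 := by
    intro ε
    have step : ∀ i : {x : ℝ // x ≠ 0}, (starRingEnd ℂ) (g i) *
        ((kerK t K1 i.1 (p+ε) - kerK t K1 i.1 (p-ε)
          - (kerK t K1 i.1 (p+2*ε) - kerK t K1 i.1 (p-2*ε))/2) / ((ε^t : ℝ) : ℂ))
        = ((starRingEnd ℂ) (g i) * kerK t K1 i.1 (p+ε))/((ε^t : ℝ) : ℂ)
          - ((starRingEnd ℂ) (g i) * kerK t K1 i.1 (p-ε))/((ε^t : ℝ) : ℂ)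
          - (((starRingEnd ℂ) (g i) * kerK t K1 i.1 (p+2*ε))
              - ((starRingEnd ℂ) (g i) * kerK t K1 i.1 (p-2*ε)))/(2*((ε^t : ℝ) : ℂ)) :=
      fun i => by ring
    rw [Finset.sum_congr rfl (fun i _ => step i), Finset.sum_sub_distrib, Finset.sum_sub_distrib,
      ← Finset.sum_div, ← Finset.sum_div, ← Finset.sum_div, Finset.sum_sub_distrib,
      hF, hF, hF, hF]
    simp
  have h2 : (starRingEnd ℂ) (g j) * (Complex.I * ((((2:ℝ)^t - 2) * K1.im : ℝ) : ℂ)) = 0 :=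
    tendsto_nhds_unique hAsym ((Filter.tendsto_congr hzero2).mpr tendsto_const_nhds)
  -- conclude
  by_contra hgj
  have hcgj : (starRingEnd ℂ) (g j) ≠ 0 := by
    simpa using hgj
  apply hK1
  have hre : K1.re = 0 := by
    rcases mul_eq_zero.1 h1 with h | h
    · exact absurd h hcgj
    · have : (-2 : ℝ) * (-K1).re = 0 := by exact_mod_cast h
      simp only [Complex.neg_re] at this
      linarith
  have him : K1.im = 0 := by
    rcases mul_eq_zero.1 h2 with h | h
    · exact absurd h hcgj
    · rcases mul_eq_zero.1 h with h' | h'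
      · exact absurd h' Complex.I_ne_zero
      · have : ((2:ℝ)^t - 2) * K1.im = 0 := by exact_mod_cast h'
        rcases mul_eq_zero.1 this with h'' | h''
        · exact absurd (by linarith : (2:ℝ)^t = 2) h2t
        · exact h''
  exact Complex.ext hre him
end

section
/- For a point y in the unit-disc model of H¹_ℂ represented by w = aξ₁ + ξ₂ with Re(a) > 0, the Cartan argument satisfies lim_{b→∞} Cart(g(1,b)y, g(1,−b)y, y) = −π/2. -/
open Complex Filter Topology

/-- The Hermitian form in the isotropic basis `{ξ₁, ξ₂}`:
`B(ξ₁,ξ₁) = B(ξ₂,ξ₂) = 0`, `B(ξ₁,ξ₂) = 1`; vectors are given by their coordinates. -/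
noncomputable def Bxi (v w : Fin 2 → ℂ) : ℂ :=
  v 0 * (starRingEnd ℂ) (w 1) + v 1 * (starRingEnd ℂ) (w 0)

/-- The action of `g(1,b)` on coordinates in the basis `{ξ₁, ξ₂}`. -/
noncomputable def gAct (b : ℝ) (v : Fin 2 → ℂ) : Fin 2 → ℂ :=
  ![v 0 + Complex.I * b * v 1, v 1]

lemma Bxi_gAct (a : ℂ) (c : ℝ) :
    Bxi (gAct c ![a, 1]) ![a, 1] = 2 * a.re + c * Complex.I := by
  have h := Complex.add_conj a
  simp only [Bxi, gAct, Matrix.cons_val_zero, Matrix.cons_val_one, Matrix.head_cons, map_one]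
  push_cast at h ⊢
  rw [mul_one]
  linear_combination h

theorem stmt11 (a : ℂ) (ha : 0 < a.re) :
    Tendsto
      (fun b : ℝ =>
        Complex.arg (Bxi (gAct (2 * b) ![a, 1]) ![a, 1] *
          (Bxi (gAct (-b) ![a, 1]) ![a, 1]) ^ 2))
      atTop (𝓝 (-(Real.pi / 2))) := by
  set r : ℂ := (a.re : ℂ) with hr
  -- the scaled function
  have key : Tendsto (fun b : ℝ => (2 * r * (b : ℂ)⁻¹ + 2 * Complex.I) *
      (2 * r * (b : ℂ)⁻¹ - Complex.I) ^ 2) atTop (𝓝 (-2 * Complex.I)) := by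
    have hinv : Tendsto (fun b : ℝ => ((b : ℂ))⁻¹) atTop (𝓝 0) := by
      have : Tendsto (fun b : ℝ => ((b⁻¹ : ℝ) : ℂ)) atTop (𝓝 ((0 : ℝ) : ℂ)) :=
        (Complex.continuous_ofReal.tendsto _).comp tendsto_inv_atTop_zero
      simpa using this
    have h0 : Tendsto (fun b : ℝ => 2 * r * (b : ℂ)⁻¹) atTop (𝓝 0) := by
      simpa using hinv.const_mul (2 * r)
    have h1 := ((h0.add_const (2 * Complex.I)).mul
      (((h0.sub_const Complex.I)).pow 2))
    have h2 : ((0:ℂ) + 2 * Complex.I) * ((0:ℂ) - Complex.I) ^ 2 = -2 * Complex.I := by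
      linear_combination (2 * Complex.I) * Complex.I_sq
    rwa [h2] at h1
  -- arg is continuous at -2I
  have hcont : ContinuousAt Complex.arg (-2 * Complex.I) := by
    apply Complex.continuousAt_arg
    simp [Complex.slitPlane, Complex.mem_slitPlane_iff]
  have harg : Complex.arg (-2 * Complex.I) = -(Real.pi / 2) := by
    have : (-2 : ℂ) * Complex.I = ((2 : ℝ) : ℂ) * (-Complex.I) := by push_cast; ring
    rw [this, Complex.arg_real_mul _ (by norm_num : (0:ℝ) < 2), Complex.arg_neg_I]
  have hmain : Tendsto (fun b : ℝ => Complex.arg ((2 * r * (b : ℂ)⁻¹ + 2 * Complex.I) *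
      (2 * r * (b : ℂ)⁻¹ - Complex.I) ^ 2)) atTop (𝓝 (-(Real.pi / 2))) := by
    rw [← harg]
    exact (hcont.tendsto).comp key
  refine hmain.congr' ?_
  filter_upwards [eventually_gt_atTop (0 : ℝ)] with b hb
  have hb3 : (0 : ℝ) < b ^ 3 := by positivity
  have hbne : (b : ℂ) ≠ 0 := by exact_mod_cast hb.ne'
  have hz : Bxi (gAct (2 * b) ![a, 1]) ![a, 1] *
      (Bxi (gAct (-b) ![a, 1]) ![a, 1]) ^ 2 =
      ((b ^ 3 : ℝ) : ℂ) * ((2 * r * (b : ℂ)⁻¹ + 2 * Complex.I) *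
        (2 * r * (b : ℂ)⁻¹ - Complex.I) ^ 2) := by
    rw [Bxi_gAct, Bxi_gAct]
    push_cast
    field_simp
    ring
  rw [← Complex.arg_real_mul _ hb3, ← hz]
end

section
/- Let X be a set, H a complex Hilbert space, and f, g: X → H two maps whose images are total in H. If ⟨f(x), f(y)⟩ = ⟨g(x), g(y)⟩ for all x, y ∈ X, then there exists a unitary operator A on H with A∘f = g. -/
theorem stmt17 {X : Type*} {H : Type*} [NormedAddCommGroup H] [InnerProductSpace ℂ H]
    [CompleteSpace H] (f g : X → H)
    (hf : (Submodule.span ℂ (Set.range f)).topologicalClosure = ⊤)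
    (hg : (Submodule.span ℂ (Set.range g)).topologicalClosure = ⊤)
    (hinner : ∀ x y : X, (inner ℂ (f x) (f y) : ℂ) = inner ℂ (g x) (g y)) :
    ∃ A : H ≃ₗᵢ[ℂ] H, ∀ x : X, A (f x) = g x := by
  classical
  set Tf := Finsupp.linearCombination ℂ f with hTf
  set Tg := Finsupp.linearCombination ℂ g with hTg
  have key : ∀ l m : X →₀ ℂ, (inner ℂ (Tf l) (Tf m) : ℂ) = inner ℂ (Tg l) (Tg m) := by
    intro l m
    simp only [hTf, hTg, Finsupp.linearCombination_apply, Finsupp.sum, sum_inner, inner_sum,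
      inner_smul_left, inner_smul_right, hinner]
  have hker : LinearMap.ker Tf ≤ LinearMap.ker Tg := by
    intro l hl
    rw [LinearMap.mem_ker] at hl ⊢
    have h := key l l
    rw [hl, inner_zero_left] at h
    exact inner_self_eq_zero.mp h.symm
  set K := Submodule.span ℂ (Set.range f) with hK
  have hKrange : LinearMap.range Tf = K := Finsupp.range_linearCombination ℂ
  -- the linear equivalence K ≃ (X →₀ ℂ) ⧸ ker Tf
  let e₁ : K ≃ₗ[ℂ] ((X →₀ ℂ) ⧸ LinearMap.ker Tf) :=
    (LinearEquiv.ofEq _ _ hKrange.symm).trans (LinearMap.quotKerEquivRange Tf).symm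
  let T : K →ₗ[ℂ] H := (Submodule.liftQ _ Tg hker).comp e₁.toLinearMap
  have hT : ∀ l : X →₀ ℂ, ∀ h : Tf l ∈ K, T ⟨Tf l, h⟩ = Tg l := by
    intro l h
    have h' : Tf l ∈ LinearMap.range Tf := ⟨l, rfl⟩
    have step1 : (LinearEquiv.ofEq K (LinearMap.range Tf) hKrange.symm) ⟨Tf l, h⟩
        = ⟨Tf l, h'⟩ := Subtype.ext rfl
    have he : e₁ ⟨Tf l, h⟩ = Submodule.Quotient.mk l := by
      show Tf.quotKerEquivRange.symm
        ((LinearEquiv.ofEq K (LinearMap.range Tf) hKrange.symm) ⟨Tf l, h⟩)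
          = Submodule.Quotient.mk l
      rw [step1]
      exact LinearMap.quotKerEquivRange_symm_apply_image Tf l h'
    show (LinearMap.ker Tf).liftQ Tg hker (e₁ ⟨Tf l, h⟩) = Tg l
    rw [he]
    exact Submodule.liftQ_apply _ _ _
  have hTinner : ∀ v w : K, (inner ℂ (T v) (T w) : ℂ) = inner ℂ (v : H) (w : H) := by
    rintro ⟨v, hv⟩ ⟨w, hw⟩
    obtain ⟨l, rfl⟩ := hKrange.symm ▸ hv
    obtain ⟨m, rfl⟩ := hKrange.symm ▸ hw
    rw [hT l hv, hT m hw]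
    exact (key l m).symm
  have hTnorm : ∀ v : K, ‖T v‖ = ‖v‖ := by
    intro v
    have h := hTinner v v
    rw [inner_self_eq_norm_sq_to_K, inner_self_eq_norm_sq_to_K] at h
    have h2 : (‖T v‖ : ℝ) ^ 2 = ‖(v : H)‖ ^ 2 := by exact_mod_cast h
    show ‖T v‖ = ‖(v : H)‖
    nlinarith [norm_nonneg (T v), norm_nonneg (v : H), h2]
  let Ti : K →ₗᵢ[ℂ] H := ⟨T, hTnorm⟩
  have hsub_isom : Isometry (K.subtypeL : K → H) := isometry_subtype_coe
  have h_e : IsUniformInducing (K.subtypeL : K → H) := hsub_isom.isUniformInducing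
  have h_dense : DenseRange (K.subtypeL : K → H) := by
    have : Dense (K : Set H) := by
      rw [Submodule.dense_iff_topologicalClosure_eq_top]
      exact hf
    simpa [DenseRange, Subtype.range_coe] using this
  let A₀ : H →L[ℂ] H := Ti.toContinuousLinearMap.extend K.subtypeL
  have hA₀ : ∀ v : K, A₀ (v : H) = T v := fun v =>
    ContinuousLinearMap.extend_eq _ h_dense h_e v
  have hA₀norm : ∀ h : H, ‖A₀ h‖ = ‖h‖ := by
    intro h
    refine DenseRange.induction_on h_dense h ?_ ?_
    · exact isClosed_eq (A₀.continuous.norm) continuous_norm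
    · intro v
      show ‖A₀ (v : H)‖ = ‖(v : H)‖
      rw [hA₀ v]
      exact hTnorm v
  let AI : H →ₗᵢ[ℂ] H := ⟨A₀.toLinearMap, hA₀norm⟩
  have hAIg : ∀ x : X, AI (f x) = g x := by
    intro x
    have hmem : f x ∈ K := Submodule.subset_span ⟨x, rfl⟩
    have h1 : f x = Tf (Finsupp.single x 1) := by
      simp [hTf, Finsupp.linearCombination_single]
    have : AI (f x) = T ⟨f x, hmem⟩ := hA₀ ⟨f x, hmem⟩
    rw [this]
    have h2 : T ⟨f x, hmem⟩ = Tg (Finsupp.single x 1) := by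
      have hmem' : Tf (Finsupp.single x 1) ∈ K := h1 ▸ hmem
      have := hT (Finsupp.single x 1) hmem'
      convert this using 2
      exact Subtype.ext h1
    rw [h2]
    simp [hTg, Finsupp.linearCombination_single]
  have hclosed : IsClosed (Set.range (AI : H → H)) :=
    (AI.isometry.isClosedEmbedding).isClosed_range
  have hsurj : Function.Surjective AI := by
    have hle : Submodule.span ℂ (Set.range g) ≤ LinearMap.range AI.toLinearMap := by
      rw [Submodule.span_le]
      rintro _ ⟨x, rfl⟩
      exact ⟨f x, hAIg x⟩
    have hle2 : (Submodule.span ℂ (Set.range g)).topologicalClosure ≤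
        LinearMap.range AI.toLinearMap := by
      refine Submodule.topologicalClosure_minimal _ hle ?_
      have heq : (LinearMap.range AI.toLinearMap : Set H) = Set.range (AI : H → H) := by
        ext y; simp [LinearMap.mem_range]
      rw [heq]
      exact hclosed
    rw [hg] at hle2
    intro y
    exact hle2 (Submodule.mem_top : y ∈ ⊤)
  exact ⟨LinearIsometryEquiv.ofSurjective AI hsurj, fun x => hAIg x⟩
end
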